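/- If P → Q is a Dwyer map of posets and P → R is any order-preserving map, then the pushout Q ⊔_P R computed in the category of small categories is a poset. -/

import Mathlib

open CategoryTheory Limits

universe u

/-- A monotone map of posets is a Dwyer map if it is an order embedding onto a sieve
(lower set) and it factors through a cosieve (upper set) `W` in `Q` in which `P` is
coreflective (the inclusion has a right adjoint). -/
structure IsDwyerMap {P Q : Type u} [PartialOrder P] [PartialOrder Q] (f : P →o Q) : Prop where
  inj : Function.Injective f
  reflects : ∀ p p', f p ≤ f p' → p ≤ p'
  sieve : ∀ (q : Q) (p : P), q ≤ f p → ∃ p', f p' = q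
  cosieve : ∃ W : Set Q, IsUpperSet W ∧ Set.range f ⊆ W ∧
    ∃ r : W → P, ∀ (p : P) (w : W), f p ≤ (w : Q) ↔ p ≤ r w


namespace DwyerAux

/-- Non-propositional data of a Dwyer map. -/
structure Data {P Q : Type u} [PartialOrder P] [PartialOrder Q] (k : P →o Q) where
  inj : Function.Injective k
  reflects : ∀ p p', k p ≤ k p' → p ≤ p'
  sieve : ∀ (q : Q) (p : P), q ≤ k p → ∃ p', k p' = q
  W : Set Q
  upper : IsUpperSet W
  range_sub : Set.range k ⊆ W
  r : W → P
  adj : ∀ (p : P) (w : W), k p ≤ (w : Q) ↔ p ≤ r w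

variable {P Q R : Type u} [PartialOrder P] [PartialOrder Q] [PartialOrder R]

theorem Data.kr_le {k : P →o Q} (d : Data k) (w : d.W) : k (d.r w) ≤ (w : Q) :=
  (d.adj _ w).2 le_rfl

theorem Data.r_mono {k : P →o Q} (d : Data k) {w w' : d.W} (h : (w : Q) ≤ (w' : Q)) :
    d.r w ≤ d.r w' :=
  (d.adj _ w').1 ((d.kr_le w).trans h)

theorem Data.r_k {k : P →o Q} (d : Data k) (p : P) (h : k p ∈ d.W) : d.r ⟨k p, h⟩ = p :=
  le_antisymm (d.reflects _ _ (d.kr_le ⟨k p, h⟩)) ((d.adj p ⟨k p, h⟩).1 le_rfl)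

theorem Data.k_r_of_range {k : P →o Q} (d : Data k) {q : Q} (h : q ∈ Set.range k) :
    k (d.r ⟨q, d.range_sub h⟩) = q := by
  obtain ⟨p, rfl⟩ := h
  rw [d.r_k]

/-- The explicit pushout poset: `R ⊔ (Q \ range k)`. -/
inductive Glue {P Q : Type u} [PartialOrder P] [PartialOrder Q] {R : Type u} [PartialOrder R]
    (k : P →o Q) (φ : P →o R) (d : Data k) : Type u
  | inl : R → Glue k φ d
  | inr : (q : Q) → q ∉ Set.range k → Glue k φ d

variable {k : P →o Q} {φ : P →o R} {d : Data k}

variable (k φ d) in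
def Glue.le : Glue k φ d → Glue k φ d → Prop
  | .inl x, .inl y => x ≤ y
  | .inl x, .inr q _ => ∃ hw : q ∈ d.W, x ≤ φ (d.r ⟨q, hw⟩)
  | .inr _ _, .inl _ => False
  | .inr q _, .inr q' _ => q ≤ q'

instance : PartialOrder (Glue k φ d) where
  le := Glue.le k φ d
  le_refl a := by cases a with
    | inl x => exact le_refl x
    | inr q h => exact le_refl q
  le_trans a b c hab hbc := by
    cases a with
    | inl x =>
      cases b with
      | inl y =>
        cases c with
        | inl z => exact le_trans (α := R) hab hbc
        | inr q h =>
          obtain ⟨hw, hy⟩ := hbc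
          exact ⟨hw, le_trans (α := R) hab hy⟩
      | inr q h =>
        cases c with
        | inl z => exact hbc.elim
        | inr q' h' =>
          obtain ⟨hw, hx⟩ := hab
          have hw' : q' ∈ d.W := d.upper hbc hw
          exact ⟨hw', hx.trans (φ.monotone (d.r_mono (w := ⟨q, hw⟩) (w' := ⟨q', hw'⟩) hbc))⟩
    | inr q h =>
      cases b with
      | inl y => exact hab.elim
      | inr q' h' =>
        cases c with
        | inl z => exact hbc.elim
        | inr q'' h'' => exact le_trans (α := Q) hab hbc
  le_antisymm a b hab hba := by
    cases a with
    | inl x =>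
      cases b with
      | inl y => exact congrArg _ (le_antisymm (α := R) hab hba)
      | inr q h => exact hba.elim
    | inr q h =>
      cases b with
      | inl y => exact hab.elim
      | inr q' h' =>
        have : q = q' := le_antisymm (α := Q) hab hba
        subst this
        rfl

variable (k φ d) in
/-- The map `Q → Glue`. -/
noncomputable def sigmaFun (q : Q) : Glue k φ d :=
  letI := Classical.dec (q ∈ Set.range k)
  if h : q ∈ Set.range k then .inl (φ (d.r ⟨q, d.range_sub h⟩)) else .inr q h

theorem sigmaFun_k (p : P) : sigmaFun k φ d (k p) = .inl (φ p) := by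
  rw [sigmaFun]; rw [dif_pos ⟨p, rfl⟩, d.r_k]

theorem sigmaFun_not_mem {q : Q} (h : q ∉ Set.range k) : sigmaFun k φ d q = .inr q h := by
  rw [sigmaFun, dif_neg h]

theorem sigmaFun_mono : Monotone (sigmaFun k φ d) := by
  intro q q' hqq'
  by_cases h : q ∈ Set.range k
  · obtain ⟨p, rfl⟩ := h
    rw [sigmaFun_k]
    by_cases h' : q' ∈ Set.range k
    · obtain ⟨p', rfl⟩ := h'
      rw [sigmaFun_k]
      exact φ.monotone (d.reflects _ _ hqq')
    · rw [sigmaFun_not_mem h']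
      have hw' : q' ∈ d.W := d.upper hqq' (d.range_sub ⟨p, rfl⟩)
      exact ⟨hw', φ.monotone ((d.adj p ⟨q', hw'⟩).1 hqq')⟩
  · by_cases h' : q' ∈ Set.range k
    · obtain ⟨p', rfl⟩ := h'
      obtain ⟨p, rfl⟩ := d.sieve q p' hqq'
      exact absurd ⟨p, rfl⟩ h
    · rw [sigmaFun_not_mem h, sigmaFun_not_mem h']
      exact hqq'

variable (k φ d) in
def iotaMono : Monotone (Glue.inl : R → Glue k φ d) := fun _ _ h => h

section Desc

variable {D : Type u} [Category.{u} D] (F₁ : Q ⥤ D) (F₂ : R ⥤ D)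
  (hF : k.monotone.functor ⋙ F₁ = φ.monotone.functor ⋙ F₂)

include hF in
theorem hobj (p : P) : F₁.obj (k p) = F₂.obj (φ p) := Functor.congr_obj hF p

theorem hmap {p p' : P} (h : p ≤ p') (h1 : k p ≤ k p') (h2 : φ p ≤ φ p') :
    F₁.map (homOfLE h1) =
      eqToHom (hobj F₁ F₂ hF p) ≫ F₂.map (homOfLE h2) ≫ eqToHom (hobj F₁ F₂ hF p').symm :=
  Functor.congr_hom hF (homOfLE h)

/-- rearranged version -/
theorem hmap' {p p' : P} (h : p ≤ p') (h1 : k p ≤ k p') (h2 : φ p ≤ φ p') :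
    eqToHom (hobj F₁ F₂ hF p).symm ≫ F₁.map (homOfLE h1) =
      F₂.map (homOfLE h2) ≫ eqToHom (hobj F₁ F₂ hF p').symm := by
  rw [hmap F₁ F₂ hF h h1 h2, eqToHom_trans_assoc, eqToHom_refl, Category.id_comp]

noncomputable def psi (q : Q) (hw : q ∈ d.W) :
    F₂.obj (φ (d.r ⟨q, hw⟩)) ⟶ F₁.obj q :=
  eqToHom (hobj F₁ F₂ hF (d.r ⟨q, hw⟩)).symm ≫ F₁.map (homOfLE (d.kr_le ⟨q, hw⟩))

def descObj : Glue k φ d → D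
  | .inl x => F₂.obj x
  | .inr q _ => F₁.obj q

noncomputable def descMap :
    ∀ {a b : Glue k φ d}, a ≤ b → (descObj F₁ F₂ a ⟶ descObj F₁ F₂ b)
  | .inl _, .inl _, h => F₂.map (homOfLE h)
  | .inl _, .inr q _, h => F₂.map (homOfLE h.choose_spec) ≫ psi F₁ F₂ hF q h.choose
  | .inr _ _, .inl _, h => h.elim
  | .inr _ _, .inr _ _, h => F₁.map (homOfLE h)

noncomputable def desc : Glue k φ d ⥤ D where
  obj := descObj F₁ F₂
  map {a b} f := descMap F₁ F₂ hF (leOfHom f)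
  map_id a := by
    cases a with
    | inl x =>
      show F₂.map (homOfLE _) = _
      exact F₂.map_id x
    | inr q h =>
      show F₁.map (homOfLE _) = _
      exact F₁.map_id q
  map_comp {a b c} f g := by
    cases a with
    | inl x =>
      cases b with
      | inl y =>
        cases c with
        | inl z =>
          show F₂.map _ = F₂.map _ ≫ F₂.map _
          rw [← F₂.map_comp]
          exact congrArg F₂.map (Subsingleton.elim _ _)
        | inr q hq =>
          show F₂.map _ ≫ psi F₁ F₂ hF q _ = F₂.map _ ≫ F₂.map _ ≫ psi F₁ F₂ hF q _
          rw [← Category.assoc, ← F₂.map_comp]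
          congr 1
      | inr q hq =>
        cases c with
        | inl z => exact (leOfHom g).elim
        | inr q' hq' =>
          have hqq' : q ≤ q' := leOfHom g
          have hw : q ∈ d.W := (leOfHom f).choose
          have hw' : q' ∈ d.W := d.upper hqq' hw
          show F₂.map _ ≫ psi F₁ F₂ hF q' _ =
            (F₂.map _ ≫ psi F₁ F₂ hF q _) ≫ F₁.map (homOfLE _)
          rw [psi, psi]
          have hr : d.r ⟨q, hw⟩ ≤ d.r ⟨q', hw'⟩ := d.r_mono hqq'
          have key := hmap' F₁ F₂ hF hr (k.monotone hr) (φ.monotone hr)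
          have e1 : (homOfLE (leOfHom (f ≫ g)).choose_spec :
              x ⟶ (φ (d.r ⟨q', (leOfHom (f ≫ g)).choose⟩) : R)) =
              homOfLE (leOfHom f).choose_spec ≫ homOfLE (φ.monotone hr) :=
            Subsingleton.elim _ _
          rw [e1, F₂.map_comp, Category.assoc,
            ← Category.assoc (F₂.map (homOfLE (φ.monotone hr))), ← key]
          simp only [Category.assoc, ← F₁.map_comp]
          congr 3
    | inr q hq =>
      cases b with
      | inl y => exact (leOfHom f).elim
      | inr q' hq' =>
        cases c with
        | inl z => exact (leOfHom g).elim
        | inr q'' hq'' =>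
          show F₁.map _ = F₁.map _ ≫ F₁.map _
          rw [← F₁.map_comp]
          exact congrArg F₁.map (Subsingleton.elim _ _)

theorem desc_map_subst {a a' b b' : Glue k φ d} (ea : a = a') (eb : b = b')
    (hab : a ≤ b) (hab' : a' ≤ b') :
    descMap F₁ F₂ hF hab =
      eqToHom (congrArg (descObj F₁ F₂) ea) ≫ descMap F₁ F₂ hF hab' ≫
        eqToHom (congrArg (descObj F₁ F₂) eb).symm := by
  subst ea; subst eb
  simp only [eqToHom_refl, Category.comp_id, Category.id_comp]

include hF in
theorem desc_comp_inl : (iotaMono k φ d).functor ⋙ desc F₁ F₂ hF = F₂ := by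
  refine CategoryTheory.Functor.ext (fun x => rfl) (fun x y f => ?_)
  show F₂.map (homOfLE _) = 𝟙 _ ≫ F₂.map f ≫ 𝟙 _
  rw [Category.comp_id, Category.id_comp]
  exact congrArg F₂.map (Subsingleton.elim _ _)

theorem desc_comp_sigma : (sigmaFun_mono (k := k) (φ := φ) (d := d)).functor ⋙ desc F₁ F₂ hF = F₁ := by
  refine CategoryTheory.Functor.ext (fun q => ?_) (fun q q' f => ?_)
  · by_cases h : q ∈ Set.range k
    · obtain ⟨p, rfl⟩ := Set.mem_range.1 h
      show descObj F₁ F₂ (sigmaFun k φ d (k p)) = _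
      rw [sigmaFun_k]
      exact (hobj F₁ F₂ hF p).symm
    · show descObj F₁ F₂ (sigmaFun k φ d q) = _
      rw [sigmaFun_not_mem h]
      rfl
  · have hle : q ≤ q' := leOfHom f
    show descMap F₁ F₂ hF _ = _
    by_cases h : q ∈ Set.range k
    · obtain ⟨p, rfl⟩ := Set.mem_range.1 h
      by_cases h' : q' ∈ Set.range k
      · obtain ⟨p', rfl⟩ := Set.mem_range.1 h'
        have hp : p ≤ p' := d.reflects _ _ hle
        erw [desc_map_subst F₁ F₂ hF (sigmaFun_k (d := d) p) (sigmaFun_k p')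
          _ (show Glue.le k φ d (.inl (φ p)) (.inl (φ p')) from φ.monotone hp)]
        show eqToHom _ ≫ F₂.map (homOfLE (φ.monotone hp)) ≫ eqToHom _ = _
        rw [show f = homOfLE hle from Subsingleton.elim _ _]
        rw [hmap F₁ F₂ hF hp hle (φ.monotone hp)]
        simp [eqToHom_trans]
        erw [eqToHom_trans_assoc, eqToHom_trans]
        rfl
      · have hw' : q' ∈ d.W := d.upper hle (d.range_sub ⟨p, rfl⟩)
        have hp : p ≤ d.r ⟨q', hw'⟩ := (d.adj p ⟨q', hw'⟩).1 hle
        have hle' : Glue.le k φ d (.inl (φ p)) (.inr q' h') := ⟨hw', φ.monotone hp⟩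
        erw [desc_map_subst F₁ F₂ hF (sigmaFun_k p) (sigmaFun_not_mem h') _ hle']
        show eqToHom _ ≫ (F₂.map (homOfLE hle'.choose_spec) ≫ psi F₁ F₂ hF q' hle'.choose) ≫
          eqToHom _ = _
        rw [psi]
        rw [show (homOfLE hle'.choose_spec : (φ p : R) ⟶ _) = homOfLE (φ.monotone hp) from
          Subsingleton.elim _ _]
        rw [show f = homOfLE hle from Subsingleton.elim _ _]
        rw [show (homOfLE hle : (k p : Q) ⟶ q') =
          homOfLE (k.monotone hp) ≫ homOfLE (d.kr_le ⟨q', hw'⟩) from Subsingleton.elim _ _]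
        rw [F₁.map_comp, hmap F₁ F₂ hF hp (k.monotone hp) (φ.monotone hp)]
        simp [eqToHom_trans]
        erw [eqToHom_trans_assoc]
        rfl
    · by_cases h' : q' ∈ Set.range k
      · obtain ⟨p', rfl⟩ := Set.mem_range.1 h'
        obtain ⟨p0, rfl⟩ := d.sieve q p' hle
        exact absurd ⟨p0, rfl⟩ h
      · erw [desc_map_subst F₁ F₂ hF (sigmaFun_not_mem h) (sigmaFun_not_mem h')
          _ (show Glue.le k φ d (.inr q h) (.inr q' h') from hle)]
        show eqToHom _ ≫ F₁.map (homOfLE hle) ≫ eqToHom _ = _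
        rw [show f = homOfLE hle from Subsingleton.elim _ _]
        rfl

end Desc

end DwyerAux

open DwyerAux in
/-- If `P ⟶ Q` is a Dwyer map of posets and `P ⟶ R` is any order-preserving map, then the
pushout `Q ⊔_P R` computed in the category of small categories is a poset (it is thin, and
mutually inverse morphisms have equal endpoints). -/
theorem pushout_along_dwyer_isPoset
    {P Q R : Type u} [PartialOrder P] [PartialOrder Q] [PartialOrder R]
    (k : P →o Q) (φ : P →o R) (hk : IsDwyerMap k)
    (C : Cat.{u, u}) (g₁ : Cat.of Q ⟶ C) (g₂ : Cat.of R ⟶ C)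
    (sq : IsPushout (show Cat.of P ⟶ Cat.of Q from k.monotone.functor.toCatHom)
      (show Cat.of P ⟶ Cat.of R from φ.monotone.functor.toCatHom) g₁ g₂) :
    (∀ a b : C, Subsingleton (a ⟶ b)) ∧ ∀ a b : C, (a ⟶ b) → (b ⟶ a) → a = b := by
  obtain ⟨W, hW, hsub, r, hr⟩ := hk.cosieve
  let d : Data k := ⟨hk.inj, hk.reflects, hk.sieve, W, hW, hsub, r, hr⟩
  let S : Cat.{u, u} := Cat.of (Glue k φ d)
  let G₁f : Q ⥤ Glue k φ d := (sigmaFun_mono (k := k) (φ := φ) (d := d)).functor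
  let G₂f : R ⥤ Glue k φ d := (iotaMono k φ d).functor
  let G₁ : Cat.of Q ⟶ S := G₁f.toCatHom
  let G₂ : Cat.of R ⟶ S := G₂f.toCatHom
  have comm' : (k.monotone.functor ⋙ (sigmaFun_mono (k := k) (φ := φ) (d := d)).functor :
        P ⥤ Glue k φ d) = φ.monotone.functor ⋙ (iotaMono k φ d).functor :=
    CategoryTheory.Functor.ext (fun p => sigmaFun_k p) (fun _ _ _ => Subsingleton.elim _ _)
  have comm : (show Cat.of P ⟶ Cat.of Q from k.monotone.functor.toCatHom) ≫ G₁ =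
      (show Cat.of P ⟶ Cat.of R from φ.monotone.functor.toCatHom) ≫ G₂ :=
    congrArg Functor.toCatHom comm'
  let g₁f : Q ⥤ (C : Type u) := g₁.toFunctor
  let g₂f : R ⥤ (C : Type u) := g₂.toFunctor
  have hw : k.monotone.functor ⋙ g₁f = φ.monotone.functor ⋙ g₂f := congrArg Cat.Hom.toFunctor sq.w
  let Hf : Glue k φ d ⥤ (C : Type u) := desc (k := k) (φ := φ) (d := d) g₁f g₂f hw
  let Hc : S ⟶ C := Hf.toCatHom
  have h1f : G₁f ⋙ Hf = g₁f := desc_comp_sigma g₁f g₂f hw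
  have h2f : G₂f ⋙ Hf = g₂f := desc_comp_inl g₁f g₂f hw
  have h1 : G₁ ≫ Hc = g₁ := congrArg Functor.toCatHom h1f
  have h2 : G₂ ≫ Hc = g₂ := congrArg Functor.toCatHom h2f
  have hTH : sq.desc G₁ G₂ comm ≫ Hc = 𝟙 C := by
    apply sq.hom_ext
    · rw [Category.comp_id, ← Category.assoc, sq.inl_desc, h1]
    · rw [Category.comp_id, ← Category.assoc, sq.inr_desc, h2]
  let T : (C : Type u) ⥤ Glue k φ d := (sq.desc G₁ G₂ comm).toFunctor
  have hTH' : T ⋙ Hf = 𝟭 C := congrArg Cat.Hom.toFunctor hTH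
  constructor
  · intro a b
    constructor
    intro f f'
    have ea : Hf.obj (T.obj a) = a := Functor.congr_obj hTH' a
    have eb : Hf.obj (T.obj b) = b := Functor.congr_obj hTH' b
    have e1 : Hf.map (T.map f) = eqToHom ea ≫ f ≫ eqToHom eb.symm := Functor.congr_hom hTH' f
    have e1' : Hf.map (T.map f') = eqToHom ea ≫ f' ≫ eqToHom eb.symm := Functor.congr_hom hTH' f'
    have hT : T.map f = T.map f' := Subsingleton.elim _ _
    rw [hT] at e1
    have e2 := e1.symm.trans e1'
    exact (cancel_mono (eqToHom eb.symm)).1 ((cancel_epi (eqToHom ea)).1 e2)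
  · intro a b f g
    have hab : T.obj a ≤ T.obj b := leOfHom (T.map f)
    have hba : T.obj b ≤ T.obj a := leOfHom (T.map g)
    have he : T.obj a = T.obj b := le_antisymm hab hba
    have ea : Hf.obj (T.obj a) = a := Functor.congr_obj hTH' a
    have eb : Hf.obj (T.obj b) = b := Functor.congr_obj hTH' b
    rw [← ea, ← eb, he]
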